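/- arXiv:2004.13700 — 3 statements merged into one kernel-verified Lean document; each statement's English description precedes it below -/
import Mathlib

section
/- For λ > 1 and δ > 0, suppose b: (0,δ] → ℝ satisfies b(s) = 1/(λs) + O(1) as s → 0. Define ρ(t) = exp(∫ₜ^δ b(s) ds). Then ∫₀^δ ρ(t) dt < ∞, ∫₀^δ (1 + |b(t)|/2)/ρ(t) dt < ∞, and ∫₀^δ |b(t)|/2 dt = ∞. -/
open Set intervalIntegral in
open MeasureTheory in
theorem hyperbolic_point_accessible (lam δ C : ℝ) (hlam : 1 < lam)
    (hδ : 0 < δ) (b : ℝ → ℝ) (hb : ContinuousOn b (Set.Ioc 0 δ))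
    (hC : ∀ s, 0 < s → s ≤ δ → |b s - 1 / (lam * s)| ≤ C) :
    IntegrableOn (fun t => Real.exp (∫ s in t..δ, b s)) (Set.Ioc 0 δ) ∧
    IntegrableOn (fun t => (1 + |b t| / 2) / Real.exp (∫ s in t..δ, b s)) (Set.Ioc 0 δ) ∧
    ∫⁻ t in Set.Ioc 0 δ, ENNReal.ofReal (|b t| / 2) = ⊤ := by
  have hlam0 : (0:ℝ) < lam := lt_trans one_pos hlam
  have hC0 : 0 ≤ C := le_trans (abs_nonneg _) (hC δ hδ le_rfl)
  set p : ℝ := 1 / lam with hp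
  have hp0 : 0 < p := by positivity
  have hp1 : p < 1 := by
    rw [hp, div_lt_one hlam0]; exact hlam
  set F : ℝ → ℝ := fun t => ∫ s in t..δ, b s with hF
  -- interval integrability of b
  have hbint : ∀ t ∈ Set.Ioc (0:ℝ) δ, IntervalIntegrable b volume t δ := by
    intro t ht
    apply ContinuousOn.intervalIntegrable
    apply hb.mono
    rw [uIcc_of_le ht.2]
    exact fun x hx => ⟨lt_of_lt_of_le ht.1 hx.1, hx.2⟩
  -- key estimate
  have key : ∀ t ∈ Set.Ioc (0:ℝ) δ, |F t - p * Real.log (δ / t)| ≤ C * δ := by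
    intro t ht
    have ht0 := ht.1
    have h0 : (0:ℝ) ∉ uIcc t δ := by
      rw [uIcc_of_le ht.2]
      rintro ⟨h1, -⟩
      exact absurd h1 (not_le.2 ht0)
    have hcont1 : ContinuousOn (fun s : ℝ => 1 / (lam * s)) (uIcc t δ) := by
      apply ContinuousOn.div continuousOn_const
        (continuousOn_const.mul continuousOn_id)
      intro x hx
      rw [uIcc_of_le ht.2] at hx
      have : 0 < x := lt_of_lt_of_le ht0 hx.1
      exact mul_ne_zero hlam0.ne' this.ne'
    have hint1 : IntervalIntegrable (fun s : ℝ => 1 / (lam * s)) volume t δ :=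
      hcont1.intervalIntegrable
    have h1 : (∫ s in t..δ, 1 / (lam * s)) = p * Real.log (δ / t) := by
      have : ∀ s : ℝ, 1 / (lam * s) = lam⁻¹ * s⁻¹ := by
        intro s; rw [one_div, mul_inv]
      simp_rw [this]
      rw [intervalIntegral.integral_const_mul, integral_inv h0, hp, one_div]
    have h2 : F t - p * Real.log (δ / t) = ∫ s in t..δ, (b s - 1 / (lam * s)) := by
      rw [intervalIntegral.integral_sub (hbint t ht) hint1, h1]
    rw [h2]
    calc |∫ s in t..δ, (b s - 1 / (lam * s))| ≤ C * |δ - t| := by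
          rw [← Real.norm_eq_abs]
          apply intervalIntegral.norm_integral_le_of_norm_le_const
          intro x hx
          rw [uIoc_of_le ht.2] at hx
          exact hC x (lt_trans ht0 hx.1) hx.2
      _ ≤ C * δ := by
          apply mul_le_mul_of_nonneg_left _ hC0
          rw [abs_of_nonneg (by linarith [ht.2] : (0:ℝ) ≤ δ - t)]
          linarith [ht.1]
  -- continuity of F on Ioc 0 δ
  have hFcont : ContinuousOn F (Set.Ioc 0 δ) := by
    intro t ht
    have ht2 : t / 2 ≤ δ := by linarith [ht.1, ht.2]
    have hsub : uIcc (t/2) δ ⊆ Set.Ioc 0 δ := by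
      rw [uIcc_of_le ht2]
      exact fun x hx => ⟨by linarith [ht.1, hx.1], hx.2⟩
    have hint : IntegrableOn b (uIcc (t/2) δ) := by
      rw [uIcc_of_le ht2]
      exact (hb.mono (by rw [uIcc_of_le ht2] at hsub; exact hsub)).integrableOn_Icc
    have hc := intervalIntegral.continuousOn_primitive_interval_left (μ := volume) hint
    have htmem : t ∈ uIcc (t/2) δ := by
      rw [uIcc_of_le ht2]
      exact ⟨by linarith [ht.1], ht.2⟩
    refine ContinuousWithinAt.mono_of_mem_nhdsWithin (hc t htmem) ?_
    rw [mem_nhdsWithin]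
    refine ⟨Set.Ioi (t/2), isOpen_Ioi, by simpa using (by linarith [ht.1] : t/2 < t), ?_⟩
    rw [uIcc_of_le ht2]
    exact fun x hx => ⟨le_of_lt hx.1, hx.2.2⟩
  have hρcont : ContinuousOn (fun t => Real.exp (F t)) (Set.Ioc 0 δ) :=
    Real.continuous_exp.comp_continuousOn hFcont
  -- pointwise bounds
  have hrpow : ∀ t ∈ Set.Ioc (0:ℝ) δ, (δ / t) ^ p = δ ^ p * t ^ (-p) := by
    intro t ht
    rw [Real.div_rpow hδ.le ht.1.le, Real.rpow_neg ht.1.le, div_eq_mul_inv]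
  have lemA : ∀ t ∈ Set.Ioc (0:ℝ) δ, Real.exp (F t) ≤ Real.exp (C*δ) * δ ^ p * t ^ (-p) := by
    intro t ht
    have h1 : F t ≤ p * Real.log (δ / t) + C * δ := by
      have := key t ht
      have := abs_le.1 this
      linarith [this.2]
    calc Real.exp (F t) ≤ Real.exp (p * Real.log (δ / t) + C * δ) := Real.exp_le_exp.2 h1
      _ = Real.exp (C*δ) * ((δ / t) ^ p) := by
          rw [Real.exp_add, Real.rpow_def_of_pos (div_pos hδ ht.1), mul_comm (Real.log _) p,
            mul_comm]
      _ = Real.exp (C*δ) * δ ^ p * t ^ (-p) := by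
          rw [hrpow t ht, mul_assoc]
  have lemB : ∀ t ∈ Set.Ioc (0:ℝ) δ, (Real.exp (F t))⁻¹ ≤ Real.exp (C*δ) * δ ^ (-p) * t ^ p := by
    intro t ht
    have h1 : -F t ≤ -(p * Real.log (δ / t)) + C * δ := by
      have := abs_le.1 (key t ht)
      linarith [this.1]
    calc (Real.exp (F t))⁻¹ = Real.exp (-F t) := (Real.exp_neg _).symm
      _ ≤ Real.exp (-(p * Real.log (δ / t)) + C * δ) := Real.exp_le_exp.2 h1
      _ = Real.exp (C*δ) * ((δ / t) ^ p)⁻¹ := by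
          rw [Real.exp_add, Real.exp_neg, Real.rpow_def_of_pos (div_pos hδ ht.1),
            mul_comm (Real.log _) p, mul_comm]
      _ = Real.exp (C*δ) * δ ^ (-p) * t ^ p := by
          rw [hrpow t ht, mul_inv, Real.rpow_neg hδ.le, Real.rpow_neg ht.1.le, inv_inv,
            mul_assoc]
  -- Part 1
  have part1 : IntegrableOn (fun t => Real.exp (F t)) (Set.Ioc 0 δ) := by
    have hgint : IntegrableOn (fun t : ℝ => Real.exp (C*δ) * δ ^ p * (t ^ (-p))) (Set.Ioc 0 δ) := by
      apply Integrable.const_mul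
      have h := intervalIntegral.intervalIntegrable_rpow' (a := 0) (b := δ) (by linarith : (-1:ℝ) < -p)
      rwa [intervalIntegrable_iff, uIoc_of_le hδ.le] at h
    refine Integrable.mono' hgint (hρcont.aestronglyMeasurable measurableSet_Ioc) ?_
    rw [ae_restrict_iff' measurableSet_Ioc]
    refine Filter.Eventually.of_forall (fun t ht => ?_)
    rw [Real.norm_eq_abs, abs_of_pos (Real.exp_pos _)]
    exact lemA t ht
  -- Part 2
  have part2 : IntegrableOn (fun t => (1 + |b t| / 2) / Real.exp (F t)) (Set.Ioc 0 δ) := by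
    set K : ℝ := Real.exp (C*δ) * δ ^ (-p) * ((1 + C/2) * δ + 1/(2*lam)) with hK
    have hgint : IntegrableOn (fun t : ℝ => K * (t ^ (p-1))) (Set.Ioc 0 δ) := by
      apply Integrable.const_mul
      have h := intervalIntegral.intervalIntegrable_rpow' (a := 0) (b := δ) (by linarith : (-1:ℝ) < p - 1)
      rwa [intervalIntegrable_iff, uIoc_of_le hδ.le] at h
    have hmeas : AEStronglyMeasurable (fun t => (1 + |b t| / 2) / Real.exp (F t))
        (volume.restrict (Set.Ioc 0 δ)) := by
      apply ContinuousOn.aestronglyMeasurable _ measurableSet_Ioc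
      exact (continuousOn_const.add (hb.abs.div_const 2)).div hρcont
        (fun x _ => (Real.exp_pos _).ne')
    refine Integrable.mono' hgint hmeas ?_
    rw [ae_restrict_iff' measurableSet_Ioc]
    refine Filter.Eventually.of_forall (fun t ht => ?_)
    have ht0 := ht.1
    have hbb : |b t| ≤ 1 / (lam * t) + C := by
      have h1 := hC t ht.1 ht.2
      have h2 : |b t| - |1 / (lam * t)| ≤ |b t - 1 / (lam * t)| := by
        exact abs_sub_abs_le_abs_sub _ _
      have h3 : |1 / (lam * t)| = 1 / (lam * t) := abs_of_pos (by positivity)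
      linarith
    have hq : (0:ℝ) ≤ t ^ (p - 1) := Real.rpow_nonneg ht0.le _
    have htp : t ^ p = t ^ (p-1) * t := by
      rw [Real.rpow_sub_one ht0.ne', div_mul_cancel₀]
      exact ht0.ne'
    rw [Real.norm_eq_abs, abs_of_nonneg (by positivity), div_eq_mul_inv]
    calc (1 + |b t| / 2) * (Real.exp (F t))⁻¹
        ≤ (1 + (1/(lam*t) + C) / 2) * (Real.exp (C*δ) * δ ^ (-p) * t ^ p) := by
          apply mul_le_mul
          · linarith
          · exact lemB t ht
          · positivity
          · nlinarith [abs_nonneg (b t)]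
      _ ≤ K * t ^ (p-1) := by
          rw [hK, htp]
          have hE : (0:ℝ) < Real.exp (C*δ) * δ ^ (-p) := by positivity
          have hfrac : 1/(lam*t) * t = 1/lam := by field_simp
          have hmain : (1 + (1/(lam*t) + C) / 2) * t ≤ (1 + C/2) * δ + 1/(2*lam) := by
            have h1 : (1 + (1/(lam*t) + C) / 2) * t = (1 + C/2) * t + 1/(2*lam) := by
              field_simp; ring
            rw [h1]
            have : (1 + C/2) * t ≤ (1 + C/2) * δ :=
              mul_le_mul_of_nonneg_left ht.2 (by linarith)
            linarith
          calc (1 + (1/(lam*t) + C) / 2) * (Real.exp (C*δ) * δ ^ (-p) * (t ^ (p-1) * t))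
              = ((1 + (1/(lam*t) + C) / 2) * t) * (Real.exp (C*δ) * δ ^ (-p) * t ^ (p-1)) := by
                ring
            _ ≤ ((1 + C/2) * δ + 1/(2*lam)) * (Real.exp (C*δ) * δ ^ (-p) * t ^ (p-1)) := by
                apply mul_le_mul_of_nonneg_right hmain (by positivity)
            _ = Real.exp (C*δ) * δ ^ (-p) * ((1 + C/2) * δ + 1/(2*lam)) * t ^ (p-1) := by
                ring
  -- Part 3
  refine ⟨part1, part2, ?_⟩
  by_contra hne
  have hmeas : AEStronglyMeasurable (fun t => |b t| / 2) (volume.restrict (Set.Ioc 0 δ)) :=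
    (hb.abs.div_const 2).aestronglyMeasurable measurableSet_Ioc
  have hint : IntegrableOn (fun t => |b t| / 2) (Set.Ioc 0 δ) := by
    refine ⟨hmeas, ?_⟩
    rw [hasFiniteIntegral_iff_ofReal (Filter.Eventually.of_forall (fun t => by positivity))]
    exact lt_top_iff_ne_top.2 hne
  have hconst : IntegrableOn (fun _ : ℝ => C/2) (Set.Ioc 0 δ) :=
    integrableOn_const measure_Ioc_lt_top.ne
  have hsum := (hint.add hconst).const_mul (2*lam)
  have hinv : IntegrableOn (fun t : ℝ => t⁻¹) (Set.Ioc 0 δ) := by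
    refine Integrable.mono' hsum measurable_inv.aestronglyMeasurable ?_
    rw [ae_restrict_iff' measurableSet_Ioc]
    refine Filter.Eventually.of_forall (fun t ht => ?_)
    have ht0 := ht.1
    have h1 : 1 / (lam * t) ≤ |b t| + C := by
      have h2 := hC t ht.1 ht.2
      have h3 : |1 / (lam * t)| - |b t| ≤ |1 / (lam * t) - b t| := abs_sub_abs_le_abs_sub _ _
      rw [abs_sub_comm] at h3
      have h4 : |1 / (lam * t)| = 1 / (lam * t) := abs_of_pos (by positivity)
      linarith
    rw [Real.norm_eq_abs, abs_of_pos (by positivity : (0:ℝ) < t⁻¹)]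
    have h5 : t⁻¹ = lam * (1 / (lam * t)) := by field_simp
    rw [h5]
    have h6 : lam * (1 / (lam * t)) ≤ lam * (|b t| + C) :=
      mul_le_mul_of_nonneg_left h1 hlam0.le
    calc lam * (1 / (lam * t)) ≤ lam * (|b t| + C) := h6
      _ = 2 * lam * (|b t| / 2 + C / 2) := by ring
  have hinv' : IntegrableOn (fun t : ℝ => t ^ (-1:ℝ)) (Set.Ioo 0 δ) := by
    refine IntegrableOn.congr_fun (hinv.mono_set Set.Ioo_subset_Ioc_self) ?_ measurableSet_Ioo
    intro x hx
    exact (Real.rpow_neg_one x).symm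
  exact absurd ((integrableOn_Ioo_rpow_iff hδ).1 hinv') (by norm_num)
end

section
/- For λ < 0 and δ > 0 sufficiently small, suppose b: (0,δ] → ℝ satisfies b(s) = 1/(λs) + O(1) as s → 0, and set ρ(t) = exp(∫ₜ^δ b(s) ds) and s(t) = ∫₀^t ρ(r) dr. Then ∫₀^δ ρ(t) dt < ∞, ∫₀^δ (1 + |b(t)|/2)/ρ(t) dt = ∞, and ∫₀^δ (1 + |b(t)|/2)·s(t)/ρ(t) dt < ∞. -/
open Set intervalIntegral Real

open MeasureTheory in
theorem negative_eigenvalue_separatrix (lam δ C : ℝ) (hlam : lam < 0)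
    (hδ : 0 < δ) (b : ℝ → ℝ) (hb : ContinuousOn b (Set.Ioc 0 δ))
    (hC : ∀ s, 0 < s → s ≤ δ → |b s - 1 / (lam * s)| ≤ C) :
    let ρ : ℝ → ℝ := fun t => Real.exp (∫ s in t..δ, b s)
    let sc : ℝ → ℝ := fun t => ∫ r in Set.Ioc 0 t, ρ r
    IntegrableOn ρ (Set.Ioc 0 δ) ∧
    (∫⁻ t in Set.Ioc 0 δ, ENNReal.ofReal ((1 + |b t| / 2) / ρ t)) = ⊤ ∧
    IntegrableOn (fun t => (1 + |b t| / 2) * sc t / ρ t) (Set.Ioc 0 δ) := by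
  intro ρ sc
  have hC0 : 0 ≤ C := le_trans (abs_nonneg _) (hC δ hδ le_rfl)
  have hlam' : 0 < -lam := neg_pos.mpr hlam
  have hlamne : lam ≠ 0 := ne_of_lt hlam
  set α : ℝ := -lam⁻¹ with hαdef
  have hα : 0 < α := by
    have : lam⁻¹ < 0 := inv_neg''.mpr hlam
    simp only [hαdef]
    linarith
  -- interval integrability facts
  have hfint : ∀ t, 0 < t → t ≤ δ → IntervalIntegrable (fun s => 1 / (lam * s)) volume t δ := by
    intro t ht htδ
    apply ContinuousOn.intervalIntegrable
    intro x hx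
    rw [uIcc_of_le htδ] at hx
    have hx0 : x ≠ 0 := ne_of_gt (lt_of_lt_of_le ht hx.1)
    exact (ContinuousAt.div continuousAt_const (continuousAt_const.mul continuousAt_id)
      (by simp [hlamne, hx0])).continuousWithinAt
  have hbint : ∀ t, 0 < t → t ≤ δ → IntervalIntegrable b volume t δ := by
    intro t ht htδ
    apply ContinuousOn.intervalIntegrable
    apply hb.mono
    rw [uIcc_of_le htδ]
    exact fun x hx => ⟨lt_of_lt_of_le ht hx.1, hx.2⟩
  -- key bounds on ρ
  have key : ∀ t, 0 < t → t ≤ δ →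
      Real.exp (-(C * δ)) * (t / δ) ^ α ≤ ρ t ∧ ρ t ≤ Real.exp (C * δ) * (t / δ) ^ α := by
    intro t ht htδ
    have h1 : (∫ s in t..δ, b s)
        = (∫ s in t..δ, 1 / (lam * s)) + ∫ s in t..δ, (b s - 1 / (lam * s)) := by
      rw [← intervalIntegral.integral_add (hfint t ht htδ)
        ((hbint t ht htδ).sub (hfint t ht htδ))]
      congr 1
      ext s
      ring
    have h0mem : (0 : ℝ) ∉ uIcc t δ := by
      rw [uIcc_of_le htδ]
      exact fun h => absurd h.1 (not_le.mpr ht)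
    have h2 : (∫ s in t..δ, 1 / (lam * s)) = lam⁻¹ * Real.log (δ / t) := by
      have heq : (fun s : ℝ => 1 / (lam * s)) = fun s : ℝ => lam⁻¹ * s⁻¹ := by
        funext s
        rw [one_div, mul_inv]
      rw [heq, intervalIntegral.integral_const_mul, integral_inv h0mem]
    have h3 : |∫ s in t..δ, (b s - 1 / (lam * s))| ≤ C * δ := by
      have hbd : ∀ x ∈ Set.uIoc t δ, ‖b x - 1 / (lam * x)‖ ≤ C := by
        intro x hx
        rw [uIoc_of_le htδ] at hx
        exact hC x (lt_trans ht hx.1) hx.2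
      have h4 := intervalIntegral.norm_integral_le_of_norm_le_const hbd
      rw [Real.norm_eq_abs] at h4
      calc |∫ s in t..δ, (b s - 1 / (lam * s))| ≤ C * |δ - t| := h4
        _ ≤ C * δ := by
            rw [abs_of_nonneg (by linarith)]
            nlinarith
    have hrpow : (t / δ) ^ α = Real.exp (lam⁻¹ * Real.log (δ / t)) := by
      rw [Real.rpow_def_of_pos (div_pos ht hδ)]
      congr 1
      rw [Real.log_div (ne_of_gt ht) (ne_of_gt hδ), Real.log_div (ne_of_gt hδ) (ne_of_gt ht),
        hαdef]
      ring
    have hρeq : ρ t = (t / δ) ^ α * Real.exp (∫ s in t..δ, (b s - 1 / (lam * s))) := by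
      show Real.exp (∫ s in t..δ, b s) = _
      rw [h1, h2, Real.exp_add, hrpow]
    have hE := abs_le.mp h3
    have hppos : (0 : ℝ) < (t / δ) ^ α := Real.rpow_pos_of_pos (div_pos ht hδ) α
    constructor
    · rw [hρeq, mul_comm (Real.exp (-(C * δ)))]
      exact mul_le_mul_of_nonneg_left (Real.exp_le_exp.mpr hE.1) hppos.le
    · rw [hρeq, mul_comm (Real.exp (C * δ))]
      exact mul_le_mul_of_nonneg_left (Real.exp_le_exp.mpr hE.2) hppos.le
  have hρpos : ∀ t, 0 < ρ t := fun t => Real.exp_pos _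
  have hple1 : ∀ t, 0 < t → t ≤ δ → (t / δ) ^ α ≤ 1 := fun t ht htδ =>
    Real.rpow_le_one (by positivity) (div_le_one_of_le₀ htδ hδ.le) hα.le
  have hub : ∀ t, 0 < t → t ≤ δ → ρ t ≤ Real.exp (C * δ) := by
    intro t ht htδ
    calc ρ t ≤ Real.exp (C * δ) * (t / δ) ^ α := (key t ht htδ).2
      _ ≤ Real.exp (C * δ) * 1 :=
        mul_le_mul_of_nonneg_left (hple1 t ht htδ) (Real.exp_pos _).le
      _ = Real.exp (C * δ) := mul_one _
  -- continuity of ρ on Ioc 0 δ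
  have hρcont : ContinuousOn ρ (Set.Ioc 0 δ) := by
    intro t₀ ht₀
    have ha : (0 : ℝ) < t₀ / 2 := by linarith [ht₀.1]
    have haδ : t₀ / 2 ≤ δ := by linarith [ht₀.1, ht₀.2]
    have hint : IntegrableOn b (uIcc (t₀ / 2) δ) := by
      rw [uIcc_of_le haδ]
      exact (hb.mono fun x hx => ⟨lt_of_lt_of_le ha hx.1, hx.2⟩).integrableOn_compact
        isCompact_Icc
    have hcont2 := intervalIntegral.continuousOn_primitive_interval_left hint
    have hcontρ : ContinuousOn ρ (uIcc (t₀ / 2) δ) :=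
      Real.continuous_exp.comp_continuousOn hcont2
    have hmem : uIcc (t₀ / 2) δ ∈ nhdsWithin t₀ (Set.Ioc 0 δ) := by
      rw [uIcc_of_le haδ]
      refine mem_nhdsWithin.mpr ⟨Set.Ioi (t₀ / 2), isOpen_Ioi,
        by simpa using (by linarith [ht₀.1] : t₀ / 2 < t₀), ?_⟩
      exact fun x hx => ⟨hx.1.le, hx.2.2⟩
    exact (hcontρ t₀ (by rw [uIcc_of_le haδ]; exact ⟨by linarith [ht₀.1], ht₀.2⟩)).mono_of_mem_nhdsWithin hmem
  have hmeas : MeasurableSet (Set.Ioc (0:ℝ) δ) := measurableSet_Ioc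
  have hρaesm : AEStronglyMeasurable ρ (volume.restrict (Set.Ioc 0 δ)) :=
    hρcont.aestronglyMeasurable hmeas
  -- Part 1
  have part1 : IntegrableOn ρ (Set.Ioc 0 δ) := by
    apply Integrable.mono' (g := fun _ => Real.exp (C * δ))
      (integrableOn_const measure_Ioc_lt_top.ne) hρaesm
    filter_upwards [ae_restrict_mem hmeas] with t ht
    rw [Real.norm_eq_abs, abs_of_pos (hρpos t)]
    exact hub t ht.1 ht.2
  refine ⟨part1, ?_, ?_⟩
  -- Part 2
  · set c : ℝ := Real.exp (-(C * δ)) / ((2 + C) * (-lam)) with hc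
    have hcpos : 0 < c := div_pos (Real.exp_pos _) (mul_pos (by linarith) hlam')
    have lower : ∀ t ∈ Set.Ioc (0:ℝ) δ, c / t ≤ (1 + |b t| / 2) / ρ t := by
      intro t ht
      have hy : 0 < (-lam) * t := mul_pos hlam' ht.1
      have habs : |1 / (lam * t)| = 1 / ((-lam) * t) := by
        rw [abs_div, abs_one, abs_mul, abs_of_neg hlam, abs_of_pos ht.1]
      have hbt : 1 / ((-lam) * t) - C ≤ |b t| := by
        have h2 := abs_sub_abs_le_abs_sub (1 / (lam * t)) (b t)
        have h3 : |1 / (lam * t) - b t| ≤ C := by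
          rw [abs_sub_comm]
          exact hC t ht.1 ht.2
        linarith
      have h1b : 1 / ((2 + C) * ((-lam) * t)) ≤ 1 + |b t| / 2 := by
        by_cases hcase : 1 / ((-lam) * t) ≤ 2 + C
        · have h1 : 1 / ((2 + C) * ((-lam) * t)) ≤ 1 := by
            rw [div_le_one (mul_pos (by linarith) hy)]
            have h6 := (div_le_iff₀ hy).mp hcase
            linarith
          linarith [abs_nonneg (b t)]
        · push_neg at hcase
          have h2 : (2 + C) * ((-lam) * t) < 1 := (lt_div_iff₀ hy).mp hcase
          have hB2 : 2 < |b t| := by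
            have : 2 + C < 1 / ((-lam) * t) := hcase
            linarith
          rw [div_le_iff₀ (mul_pos (by linarith : (0:ℝ) < 2 + C) hy)]
          have h3 : 1 ≤ (|b t| + C) * ((-lam) * t) := by
            have h7 : 1 / ((-lam) * t) ≤ |b t| + C := by linarith
            calc (1:ℝ) = 1 / ((-lam) * t) * ((-lam) * t) := (one_div_mul_cancel hy.ne').symm
              _ ≤ (|b t| + C) * ((-lam) * t) := mul_le_mul_of_nonneg_right h7 hy.le
          nlinarith [mul_nonneg (mul_nonneg hC0 (abs_nonneg (b t))) hy.le, hy.le]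
      have hinv : Real.exp (-(C * δ)) ≤ (ρ t)⁻¹ := by
        rw [Real.exp_neg]
        exact inv_anti₀ (hρpos t) (hub t ht.1 ht.2)
      have hmul := mul_le_mul h1b hinv (Real.exp_pos _).le (by positivity)
      calc c / t = 1 / ((2 + C) * ((-lam) * t)) * Real.exp (-(C * δ)) := by
            rw [hc]
            field_simp
        _ ≤ (1 + |b t| / 2) * (ρ t)⁻¹ := hmul
        _ = (1 + |b t| / 2) / ρ t := (div_eq_mul_inv _ _).symm
    have hdiv : (∫⁻ t in Set.Ioc (0:ℝ) δ, ENNReal.ofReal (c / t)) = ⊤ := by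
      by_contra hne
      have hcont' : ContinuousOn (fun t : ℝ => c / t) (Set.Ioc 0 δ) :=
        continuousOn_const.div continuousOn_id fun t ht => ne_of_gt ht.1
      have haesm' : AEStronglyMeasurable (fun t : ℝ => c / t) (volume.restrict (Set.Ioc 0 δ)) := hcont'.aestronglyMeasurable hmeas
      have hint : IntegrableOn (fun t : ℝ => c / t) (Set.Ioc 0 δ) := by
        refine ⟨haesm', ?_⟩
        rw [hasFiniteIntegral_iff_norm]
        have heq : (∫⁻ t in Set.Ioc (0:ℝ) δ, ENNReal.ofReal ‖c / t‖)
            = ∫⁻ t in Set.Ioc (0:ℝ) δ, ENNReal.ofReal (c / t) := by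
          apply setLIntegral_congr_fun hmeas
          intro t ht
          show ENNReal.ofReal ‖c / t‖ = ENNReal.ofReal (c / t)
          rw [Real.norm_eq_abs, abs_of_nonneg (div_nonneg hcpos.le ht.1.le)]
        rw [heq]
        exact lt_top_iff_ne_top.mpr hne
      have h2 : IntegrableOn (fun t : ℝ => t ^ (-1 : ℝ)) (Set.Ioo (0:ℝ) δ) := by
        have h3 : IntegrableOn (fun t : ℝ => c⁻¹ * (c / t)) (Set.Ioo 0 δ) :=
          (hint.mono_set Set.Ioo_subset_Ioc_self).const_mul c⁻¹
        apply IntegrableOn.congr_fun h3 ?_ measurableSet_Ioo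
        intro t ht
        show c⁻¹ * (c / t) = t ^ (-1 : ℝ)
        rw [Real.rpow_neg_one]
        have hc0 : c ≠ 0 := ne_of_gt hcpos
        field_simp
      rw [integrableOn_Ioo_rpow_iff hδ] at h2
      linarith
    have hle : (∫⁻ t in Set.Ioc (0:ℝ) δ, ENNReal.ofReal (c / t))
        ≤ ∫⁻ t in Set.Ioc (0:ℝ) δ, ENNReal.ofReal ((1 + |b t| / 2) / ρ t) :=
      setLIntegral_mono' hmeas fun t ht => ENNReal.ofReal_le_ofReal (lower t ht)
    rw [hdiv] at hle
    exact eq_top_iff.mpr hle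
  -- Part 3
  · have hscnonneg : ∀ t, 0 ≤ sc t := fun t =>
      setIntegral_nonneg measurableSet_Ioc fun r _ => (hρpos r).le
    have hsccont : ContinuousOn sc (Set.Icc 0 δ) :=
      continuousOn_primitive (by rw [integrableOn_Icc_iff_integrableOn_Ioc]; exact part1)
    set A : ℝ := (1 + C / 2) * δ + 1 / (2 * (-lam)) with hAdef
    have hA : 0 < A := add_pos (mul_pos (by linarith) hδ)
      (one_div_pos.mpr (by linarith))
    have hbbound : ∀ t ∈ Set.Ioc (0:ℝ) δ, 1 + |b t| / 2 ≤ A / t := by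
      intro t ht
      have habs : |1 / (lam * t)| = 1 / ((-lam) * t) := by
        rw [abs_div, abs_one, abs_mul, abs_of_neg hlam, abs_of_pos ht.1]
      have h5 : |b t| ≤ C + 1 / ((-lam) * t) := by
        have h1 := hC t ht.1 ht.2
        have h2 := abs_sub_abs_le_abs_sub (b t) (1 / (lam * t))
        linarith
      rw [le_div_iff₀ ht.1]
      have heq : (1 + (C + 1 / ((-lam) * t)) / 2) * t = t + C * t / 2 + 1 / (2 * (-lam)) := by
        field_simp [hlamne, ne_of_gt ht.1]
        ring
      have hle2 : (1 + |b t| / 2) * t ≤ (1 + (C + 1 / ((-lam) * t)) / 2) * t :=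
        mul_le_mul_of_nonneg_right (by linarith) ht.1.le
      rw [heq] at hle2
      have hct : C * t ≤ C * δ := mul_le_mul_of_nonneg_left ht.2 hC0
      calc (1 + |b t| / 2) * t ≤ t + C * t / 2 + 1 / (2 * (-lam)) := hle2
        _ ≤ A := by
            rw [hAdef]
            have := ht.2
            nlinarith
    have hscbound : ∀ t ∈ Set.Ioc (0:ℝ) δ, sc t ≤ Real.exp (C * δ) * (t / δ) ^ α * t := by
      intro t ht
      have hbnd : ∀ r ∈ Set.Ioc (0:ℝ) t, ‖ρ r‖ ≤ Real.exp (C * δ) * (t / δ) ^ α := by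
        intro r hr
        rw [Real.norm_eq_abs, abs_of_pos (hρpos r)]
        calc ρ r ≤ Real.exp (C * δ) * (r / δ) ^ α := (key r hr.1 (hr.2.trans ht.2)).2
          _ ≤ Real.exp (C * δ) * (t / δ) ^ α :=
            mul_le_mul_of_nonneg_left
              (Real.rpow_le_rpow (div_nonneg hr.1.le hδ.le)
                ((div_le_div_iff_of_pos_right hδ).mpr hr.2) hα.le)
              (Real.exp_pos _).le
      have hm : AEStronglyMeasurable ρ (volume.restrict (Set.Ioc 0 t)) :=
        (hρcont.mono fun x hx => ⟨hx.1, hx.2.trans ht.2⟩).aestronglyMeasurable measurableSet_Ioc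
      have hnorm := norm_setIntegral_le_of_norm_le_const (μ := volume)
        measure_Ioc_lt_top hbnd
      rw [Measure.real, Real.volume_Ioc, sub_zero, ENNReal.toReal_ofReal ht.1.le] at hnorm
      calc sc t ≤ ‖sc t‖ := le_abs_self _
        _ ≤ _ := hnorm
    have hgbound : ∀ t ∈ Set.Ioc (0:ℝ) δ,
        ‖(1 + |b t| / 2) * sc t / ρ t‖ ≤ A * Real.exp (C * δ) * Real.exp (C * δ) := by
      intro t ht
      have hp : 0 < (t / δ) ^ α := Real.rpow_pos_of_pos (div_pos ht.1 hδ) α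
      have hinvρ : (ρ t)⁻¹ ≤ Real.exp (C * δ) * ((t / δ) ^ α)⁻¹ := by
        have h1 : (ρ t)⁻¹ ≤ (Real.exp (-(C * δ)) * (t / δ) ^ α)⁻¹ :=
          inv_anti₀ (by positivity) (key t ht.1 ht.2).1
        have h2 : (Real.exp (-(C * δ)) * (t / δ) ^ α)⁻¹
            = Real.exp (C * δ) * ((t / δ) ^ α)⁻¹ := by
          rw [mul_inv, ← Real.exp_neg, neg_neg]
        rwa [h2] at h1
      have hnn : 0 ≤ (1 + |b t| / 2) * sc t := mul_nonneg (by positivity) (hscnonneg t)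
      rw [Real.norm_eq_abs, abs_of_nonneg (div_nonneg hnn (hρpos t).le), div_eq_mul_inv]
      have hAt : 0 ≤ A / t := div_nonneg hA.le ht.1.le
      calc (1 + |b t| / 2) * sc t * (ρ t)⁻¹
          ≤ (A / t * (Real.exp (C * δ) * (t / δ) ^ α * t))
            * (Real.exp (C * δ) * ((t / δ) ^ α)⁻¹) := by
            apply mul_le_mul _ hinvρ (inv_nonneg.mpr (hρpos t).le)
              (mul_nonneg hAt (mul_nonneg (mul_nonneg (Real.exp_pos _).le hp.le) ht.1.le))
            exact mul_le_mul (hbbound t ht) (hscbound t ht) (hscnonneg t) hAt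
        _ = A * Real.exp (C * δ) * Real.exp (C * δ) := by
            have ht0 : t ≠ 0 := ne_of_gt ht.1
            have hp0 : (t / δ) ^ α ≠ 0 := ne_of_gt hp
            field_simp
    have hgcont : ContinuousOn (fun t => (1 + |b t| / 2) * sc t / ρ t) (Set.Ioc 0 δ) :=
      ((continuousOn_const.add ((hb.abs).div_const 2)).mul
        (hsccont.mono Set.Ioc_subset_Icc_self)).div hρcont fun t _ => (hρpos t).ne'
    apply Integrable.mono' (g := fun _ => A * Real.exp (C * δ) * Real.exp (C * δ))
      (integrableOn_const measure_Ioc_lt_top.ne)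
      (hgcont.aestronglyMeasurable hmeas)
    filter_upwards [ae_restrict_mem hmeas] with t ht
    exact hgbound t ht
end

section
/- On the surface S = {(x,y,z,w) ∈ SL(2,ℝ) : y = z}, parameterise the sheet containing the identity by x = cosh(kr) + sinh(kr)cos θ, w = cosh(kr) - sinh(kr)cos θ, y = z = sinh(kr)sin θ for r > 0, θ ∈ [0,2π). With u(x,y,z,w) = y - z and X₁ = 2kX, X₂ = 2kY, X₀ = 4k²K as above, one has (X₁u)(r,θ) = -2k·sinh(kr)·sin θ, (X₂u)(r,θ) = 2k·sinh(kr)·cos θ, (X₀u)(r,θ) = 4k²·cosh(kr), and hence b = X₀u/√((X₁u)² + (X₂u)²) = 2k·coth(kr). -/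
noncomputable def VX (f : ℝ × ℝ × ℝ × ℝ → ℝ) (p : ℝ × ℝ × ℝ × ℝ) : ℝ :=
  (1 / 2) * (p.1 * fderiv ℝ f p (1, 0, 0, 0) - p.2.1 * fderiv ℝ f p (0, 1, 0, 0)
    + p.2.2.1 * fderiv ℝ f p (0, 0, 1, 0) - p.2.2.2 * fderiv ℝ f p (0, 0, 0, 1))

noncomputable def VY (f : ℝ × ℝ × ℝ × ℝ → ℝ) (p : ℝ × ℝ × ℝ × ℝ) : ℝ :=
  (1 / 2) * (p.2.1 * fderiv ℝ f p (1, 0, 0, 0) + p.1 * fderiv ℝ f p (0, 1, 0, 0)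
    + p.2.2.2 * fderiv ℝ f p (0, 0, 1, 0) + p.2.2.1 * fderiv ℝ f p (0, 0, 0, 1))

noncomputable def VK (f : ℝ × ℝ × ℝ × ℝ → ℝ) (p : ℝ × ℝ × ℝ × ℝ) : ℝ :=
  (1 / 2) * (-p.2.1 * fderiv ℝ f p (1, 0, 0, 0) + p.1 * fderiv ℝ f p (0, 1, 0, 0)
    - p.2.2.2 * fderiv ℝ f p (0, 0, 1, 0) + p.2.2.1 * fderiv ℝ f p (0, 0, 0, 1))

noncomputable def LX1 (k : ℝ) (f : ℝ × ℝ × ℝ × ℝ → ℝ) (p : ℝ × ℝ × ℝ × ℝ) : ℝ :=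
  2 * k * VX f p

noncomputable def LX2 (k : ℝ) (f : ℝ × ℝ × ℝ × ℝ → ℝ) (p : ℝ × ℝ × ℝ × ℝ) : ℝ :=
  2 * k * VY f p

noncomputable def LX0 (k : ℝ) (f : ℝ × ℝ × ℝ × ℝ → ℝ) (p : ℝ × ℝ × ℝ × ℝ) : ℝ :=
  4 * k ^ 2 * VK f p

noncomputable def Lu : (ℝ × ℝ × ℝ × ℝ) →L[ℝ] ℝ :=
  ((ContinuousLinearMap.fst ℝ ℝ (ℝ × ℝ)).comp (ContinuousLinearMap.snd ℝ ℝ (ℝ × ℝ × ℝ))) -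
  ((ContinuousLinearMap.fst ℝ ℝ ℝ).comp
    ((ContinuousLinearMap.snd ℝ ℝ (ℝ × ℝ)).comp (ContinuousLinearMap.snd ℝ ℝ (ℝ × ℝ × ℝ))))

lemma fderiv_u (p v : ℝ × ℝ × ℝ × ℝ) :
    fderiv ℝ (fun q : ℝ × ℝ × ℝ × ℝ => q.2.1 - q.2.2.1) p v = v.2.1 - v.2.2.1 := by
  have h : (fun q : ℝ × ℝ × ℝ × ℝ => q.2.1 - q.2.2.1) = ⇑Lu := rfl
  rw [h, Lu.fderiv]
  rfl

theorem sl2_surface_drift (k r θ : ℝ) (hk : 0 < k) (hr : 0 < r) :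
    let u : ℝ × ℝ × ℝ × ℝ → ℝ := fun p => p.2.1 - p.2.2.1
    let P : ℝ × ℝ × ℝ × ℝ :=
      (Real.cosh (k * r) + Real.sinh (k * r) * Real.cos θ,
       Real.sinh (k * r) * Real.sin θ,
       Real.sinh (k * r) * Real.sin θ,
       Real.cosh (k * r) - Real.sinh (k * r) * Real.cos θ)
    (LX1 k u P = -(2 * k * Real.sinh (k * r) * Real.sin θ)) ∧
    (LX2 k u P = 2 * k * Real.sinh (k * r) * Real.cos θ) ∧
    (LX0 k u P = 4 * k ^ 2 * Real.cosh (k * r)) ∧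
    (LX0 k u P / Real.sqrt ((LX1 k u P) ^ 2 + (LX2 k u P) ^ 2)
      = 2 * k * (Real.cosh (k * r) / Real.sinh (k * r)))  := by
  intro u P
  have hs : 0 < Real.sinh (k * r) := Real.sinh_pos_iff.2 (by positivity)
  have h1 : LX1 k u P = -(2 * k * Real.sinh (k * r) * Real.sin θ) := by
    simp only [LX1, VX, u, P, fderiv_u]
    ring
  have h2 : LX2 k u P = 2 * k * Real.sinh (k * r) * Real.cos θ := by
    simp only [LX2, VY, u, P, fderiv_u]
    ring
  have h0 : LX0 k u P = 4 * k ^ 2 * Real.cosh (k * r) := by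
    simp only [LX0, VK, u, P, fderiv_u]
    ring
  refine ⟨h1, h2, h0, ?_⟩
  rw [h0, h1, h2]
  have hsq : (-(2 * k * Real.sinh (k * r) * Real.sin θ)) ^ 2 +
      (2 * k * Real.sinh (k * r) * Real.cos θ) ^ 2 =
      (2 * k * Real.sinh (k * r)) ^ 2 := by
    have := Real.sin_sq_add_cos_sq θ
    nlinarith [this]
  rw [hsq, Real.sqrt_sq (by positivity)]
  field_simp
  ring
end
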